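/- Let 1 ≤ p ≤ r < ∞ and for each k ∈ ℕ let A_k = (a_{ij}^{(k)})_{i,j∈ℕ} be an infinite matrix of non-negative real numbers belonging to ℓ^r(ℓ^p), i.e. ‖A_k‖_{ℓ^r(ℓ^p)} = (Σ_i (Σ_j (a_{ij}^{(k)})^p)^{r/p})^{1/r} < ∞. Assume the matrices have pairwise disjoint supports: a_{ij}^{(k)} · a_{ij}^{(l)} = 0 for all i, j and all k ≠ l. Then the pointwise sum Σ_k A_k satisfies ‖Σ_k A_k‖_{ℓ^r(ℓ^p)} ≤ (Σ_k ‖A_k‖_{ℓ^r(ℓ^p)}^p)^{1/p}. -/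

import Mathlib

open scoped ENNReal

open MeasureTheory in
/-- Minkowski inequality for two `ℝ≥0∞`-valued sequences. -/
lemma tsum_Lp_add_le' {f g : ℕ → ℝ≥0∞} {q : ℝ} (hq : 1 ≤ q) :
    (∑' i, (f i + g i) ^ q) ^ (1 / q) ≤
      (∑' i, f i ^ q) ^ (1 / q) + (∑' i, g i ^ q) ^ (1 / q) := by
  simp_rw [← MeasureTheory.lintegral_count]
  exact ENNReal.lintegral_Lp_add_le
    (measurable_of_countable f).aemeasurable (measurable_of_countable g).aemeasurable hq

/-- Minkowski inequality for a finite family of `ℝ≥0∞`-valued sequences. -/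
lemma finset_tsum_Lp_le {q : ℝ} (hq : 1 ≤ q) (f : ℕ → ℕ → ℝ≥0∞) (F : Finset ℕ) :
    (∑' i, (∑ k ∈ F, f k i) ^ q) ^ (1 / q) ≤
      ∑ k ∈ F, (∑' i, f k i ^ q) ^ (1 / q) := by
  have hq0 : 0 < q := lt_of_lt_of_le zero_lt_one hq
  classical
  induction F using Finset.induction with
  | empty =>
      simp [ENNReal.zero_rpow_of_pos hq0, ENNReal.zero_rpow_of_pos (by positivity : (0:ℝ) < 1/q), hq0]
  | @insert a s hk ih =>
      simp only [Finset.sum_insert hk]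
      calc (∑' i, (f a i + ∑ k ∈ s, f k i) ^ q) ^ (1 / q)
          ≤ (∑' i, f a i ^ q) ^ (1 / q) + (∑' i, (∑ k ∈ s, f k i) ^ q) ^ (1 / q) :=
            tsum_Lp_add_le' hq
        _ ≤ (∑' i, f a i ^ q) ^ (1 / q) + ∑ k ∈ s, (∑' i, f k i ^ q) ^ (1 / q) :=
            add_le_add le_rfl ih

open MeasureTheory in
/-- Minkowski inequality for a countable family of `ℝ≥0∞`-valued sequences. -/
lemma tsum_Lp_le {q : ℝ} (hq : 1 ≤ q) (f : ℕ → ℕ → ℝ≥0∞) :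
    (∑' i, (∑' k, f k i) ^ q) ^ (1 / q) ≤ ∑' k, (∑' i, f k i ^ q) ^ (1 / q) := by
  have hq0 : 0 < q := lt_of_lt_of_le zero_lt_one hq
  have hmono : Monotone fun x : ℝ≥0∞ => x ^ q := fun a b h => ENNReal.rpow_le_rpow h hq0.le
  have key : (∑' i, (∑' k, f k i) ^ q) =
      ⨆ F : Finset ℕ, ∑' i, (∑ k ∈ F, f k i) ^ q := by
    have h1 : ∀ i, (∑' k, f k i) ^ q = ⨆ F : Finset ℕ, (∑ k ∈ F, f k i) ^ q := by
      intro i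
      rw [ENNReal.tsum_eq_iSup_sum]
      exact hmono.map_iSup_of_continuousAt
        (ENNReal.continuous_rpow_const.continuousAt) (ENNReal.zero_rpow_of_pos hq0)
    simp_rw [h1, ← MeasureTheory.lintegral_count]
    rw [lintegral_iSup_directed]
    · intro F
      exact (measurable_of_countable _).aemeasurable
    · intro s t
      refine ⟨s ∪ t, fun i => hmono ?_, fun i => hmono ?_⟩
      · exact Finset.sum_le_sum_of_subset Finset.subset_union_left
      · exact Finset.sum_le_sum_of_subset Finset.subset_union_right
  rw [key]
  have h2 : (⨆ F : Finset ℕ, ∑' i, (∑ k ∈ F, f k i) ^ q) ^ (1 / q)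
      = ⨆ F : Finset ℕ, (∑' i, (∑ k ∈ F, f k i) ^ q) ^ (1 / q) := by
    have hmono' : Monotone fun x : ℝ≥0∞ => x ^ (1 / q) :=
      fun a b h => ENNReal.rpow_le_rpow h (by positivity)
    exact hmono'.map_iSup_of_continuousAt
      (ENNReal.continuous_rpow_const.continuousAt)
      (ENNReal.zero_rpow_of_pos (by positivity))
  rw [h2]
  refine iSup_le fun F => (finset_tsum_Lp_le hq f F).trans ?_
  exact ENNReal.sum_le_tsum F

/-- For `1 ≤ p ≤ r < ∞`, if the non-negative matrices `A k ∈ ℓʳ(ℓᵖ)` have pairwise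
disjoint supports, then `‖∑ₖ A k‖_{ℓʳ(ℓᵖ)} ≤ (∑ₖ ‖A k‖_{ℓʳ(ℓᵖ)}^p)^{1/p}`. -/
theorem disjoint_sum_lr_lp_estimate (p r : ℝ) (hp : 1 ≤ p) (hpr : p ≤ r)
    (A : ℕ → ℕ → ℕ → ℝ)
    (hnonneg : ∀ k i j, 0 ≤ A k i j)
    (hdisj : ∀ k l i j, k ≠ l → A k i j * A l i j = 0)
    (hfin : ∀ k,
      (∑' i, (∑' j, (ENNReal.ofReal (A k i j)) ^ p) ^ (r / p)) ^ (1 / r) ≠ ∞) :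
    (∑' i, (∑' j, (ENNReal.ofReal (∑' k, A k i j)) ^ p) ^ (r / p)) ^ (1 / r)
      ≤ (∑' k,
          ((∑' i, (∑' j, (ENNReal.ofReal (A k i j)) ^ p) ^ (r / p)) ^ (1 / r)) ^ p)
          ^ (1 / p) := by
  have hp0 : 0 < p := lt_of_lt_of_le zero_lt_one hp
  have hr0 : 0 < r := lt_of_lt_of_le (lt_of_lt_of_le zero_lt_one hp) hpr
  set q : ℝ := r / p with hq_def
  have hq : 1 ≤ q := (one_le_div hp0).2 hpr
  -- pointwise disjointness
  have hpoint : ∀ i j, (ENNReal.ofReal (∑' k, A k i j)) ^ p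
      = ∑' k, (ENNReal.ofReal (A k i j)) ^ p := by
    intro i j
    by_cases h : ∃ k, A k i j ≠ 0
    · obtain ⟨k₀, hk₀⟩ := h
      have hz : ∀ l, l ≠ k₀ → A l i j = 0 := by
        intro l hl
        rcases mul_eq_zero.1 (hdisj l k₀ i j hl) with h' | h'
        · exact h'
        · exact absurd h' hk₀
      rw [tsum_eq_single k₀ hz, tsum_eq_single k₀ (fun l hl => by
        rw [hz l hl, ENNReal.ofReal_zero, ENNReal.zero_rpow_of_pos hp0])]
    · push_neg at h
      simp [h, ENNReal.zero_rpow_of_pos hp0, tsum_zero]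
  -- the inner sequences
  set S : ℕ → ℕ → ℝ≥0∞ := fun k i => ∑' j, (ENNReal.ofReal (A k i j)) ^ p with hS
  have hinner : ∀ i, (∑' j, (ENNReal.ofReal (∑' k, A k i j)) ^ p) = ∑' k, S k i := by
    intro i
    simp_rw [hpoint]
    exact ENNReal.tsum_comm
  simp_rw [hinner]
  -- exponent algebra
  have hqp : (1 : ℝ) / r = 1 / q * (1 / p) := by
    rw [hq_def]; field_simp
  have hpq : (1 : ℝ) / r * p = 1 / q := by
    rw [hq_def]; field_simp
  have key := tsum_Lp_le hq S
  calc (∑' i, (∑' k, S k i) ^ q) ^ (1 / r)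
      = ((∑' i, (∑' k, S k i) ^ q) ^ (1 / q)) ^ (1 / p) := by
        rw [hqp, ENNReal.rpow_mul]
    _ ≤ (∑' k, (∑' i, S k i ^ q) ^ (1 / q)) ^ (1 / p) :=
        ENNReal.rpow_le_rpow key (by positivity)
    _ = (∑' k, ((∑' i, S k i ^ q) ^ (1 / r)) ^ p) ^ (1 / p) := by
        congr 1
        refine tsum_congr fun k => ?_
        rw [← ENNReal.rpow_mul, hpq]
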